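/- Let G be a topological group, H ≤ G a closed subgroup and N ⊴ G a closed normal subgroup, and suppose the canonical map H/(H∩N) → cl(HN)/N is a topological isomorphism. Then HN is closed in G (so cl(HN) = HN), and for every closed (H∩N)-invariant subset F ⊆ H the set FN is closed in G. -/

import Mathlib

open Pointwise

/-- If the canonical map `H/(H ∩ N) → cl(HN)/N` is a topological group isomorphism,
then `HN` is closed in `G` and for every closed `(H ∩ N)`-invariant subset `F ⊆ H`
the product `F * N` is closed in `G`. -/
theorem closed_products_of_second_iso_topological
    {G : Type*} [Group G] [TopologicalSpace G] [IsTopologicalGroup G]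
    [LocallyCompactSpace G] [T2Space G]
    (H N : Subgroup G) [N.Normal] (hH : IsClosed (H : Set G)) (hN : IsClosed (N : Set G))
    (φ : (H ⧸ N.subgroupOf H) ≃*
        ((H ⊔ N).topologicalClosure ⧸ N.subgroupOf (H ⊔ N).topologicalClosure))
    (hφ : Continuous φ) (hφ' : Continuous φ.symm)
    (hcanon : ∀ h : H, φ (QuotientGroup.mk h) =
      QuotientGroup.mk
        (⟨(h : G), (H ⊔ N).le_topologicalClosure (Subgroup.mem_sup_left h.2)⟩ :
          (H ⊔ N).topologicalClosure)) :
    IsClosed ((H : Set G) * (N : Set G)) ∧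
      ∀ F : Set G, F ⊆ (H : Set G) → IsClosed F →
        (∀ f ∈ F, ∀ n ∈ H ⊓ N, f * n ∈ F) → IsClosed (F * (N : Set G)) := by
  have hHK : ∀ g : G, g ∈ H → g ∈ (H ⊔ N).topologicalClosure := fun g hg =>
    (H ⊔ N).le_topologicalClosure (Subgroup.mem_sup_left hg)
  have hNK : ∀ g : G, g ∈ N → g ∈ (H ⊔ N).topologicalClosure := fun g hg =>
    (H ⊔ N).le_topologicalClosure (Subgroup.mem_sup_right hg)
  have main : ∀ F : Set G, F ⊆ (H : Set G) → IsClosed F →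
      (∀ f ∈ F, ∀ n ∈ H ⊓ N, f * n ∈ F) → IsClosed (F * (N : Set G)) := by
    intro F hFH hFc hFinv
    have hK : IsClosed ((H ⊔ N).topologicalClosure : Set G) := Subgroup.isClosed_topologicalClosure _
    set F' : Set H := ((↑) : H → G) ⁻¹' F with hF'def
    have hF'c : IsClosed F' := hFc.preimage continuous_subtype_val
    -- saturation of F' under the quotient map H → H/(H∩N)
    have hsat : (QuotientGroup.mk : H → H ⧸ N.subgroupOf H) ⁻¹'
        (QuotientGroup.mk '' F') = F' := by
      ext x
      constructor
      · rintro ⟨f, hf, hfx⟩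
        have hmem : f⁻¹ * x ∈ N.subgroupOf H := QuotientGroup.eq.mp hfx
        have hN' : ((f⁻¹ * x : H) : G) ∈ N := (Subgroup.mem_subgroupOf).mp hmem
        have : (f : G) * ((f⁻¹ * x : H) : G) ∈ F :=
          hFinv (f : G) hf _ ⟨(f⁻¹ * x : H).2, hN'⟩
        exact (by simpa [mul_inv_cancel_left] using this : (x : G) ∈ F)
      · intro hx
        exact ⟨x, hx, rfl⟩
    have hQc : IsClosed ((QuotientGroup.mk : H → H ⧸ N.subgroupOf H) '' F') := by
      rw [← (QuotientGroup.isQuotientMap_mk (N.subgroupOf H)).isClosed_preimage, hsat]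
      exact hF'c
    -- push through φ
    have himg : ⇑φ '' ((QuotientGroup.mk : H → H ⧸ N.subgroupOf H) '' F')
        = ⇑φ.symm ⁻¹' ((QuotientGroup.mk : H → H ⧸ N.subgroupOf H) '' F') := by
      ext y
      constructor
      · rintro ⟨t, ht, rfl⟩
        simpa using ht
      · intro hy
        exact ⟨φ.symm y, hy, φ.apply_symm_apply y⟩
    have hSc : IsClosed (⇑φ '' ((QuotientGroup.mk : H → H ⧸ N.subgroupOf H) '' F')) := by
      rw [himg]; exact hQc.preimage hφ'
    -- pull back to K
    set C : Set (H ⊔ N).topologicalClosure := (QuotientGroup.mk : (H ⊔ N).topologicalClosure → (H ⊔ N).topologicalClosure ⧸ N.subgroupOf (H ⊔ N).topologicalClosure) ⁻¹'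
      (⇑φ '' ((QuotientGroup.mk : H → H ⧸ N.subgroupOf H) '' F')) with hCdef
    have hCc : IsClosed C := hSc.preimage continuous_quotient_mk'
    have hval : IsClosed (((↑) : (H ⊔ N).topologicalClosure → G) '' C) :=
      hK.isClosedEmbedding_subtypeVal.isClosedMap _ hCc
    have hEq : ((↑) : (H ⊔ N).topologicalClosure → G) '' C = F * (N : Set G) := by
      ext x
      constructor
      · rintro ⟨k, hk, rfl⟩
        rw [hCdef, Set.mem_preimage] at hk
        obtain ⟨t, ht, hφt⟩ := hk
        obtain ⟨f, hf, rfl⟩ := ht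
        rw [hcanon f] at hφt
        have hmem : (⟨(f : G), hHK _ f.2⟩ : (H ⊔ N).topologicalClosure)⁻¹ * k ∈ N.subgroupOf (H ⊔ N).topologicalClosure :=
          QuotientGroup.eq.mp hφt
        have hn : (f : G)⁻¹ * (k : G) ∈ N := (Subgroup.mem_subgroupOf).mp hmem
        refine ⟨(f : G), hf, (f : G)⁻¹ * (k : G), hn, ?_⟩
        simp [mul_inv_cancel_left]
      · rintro ⟨f, hf, n, hn, rfl⟩
        have hfH : f ∈ H := hFH hf
        refine ⟨⟨f * n, mul_mem (hHK _ hfH) (hNK _ hn)⟩, ?_, rfl⟩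
        rw [hCdef, Set.mem_preimage]
        refine ⟨QuotientGroup.mk (⟨f, hfH⟩ : H), ⟨⟨f, hfH⟩, hf, rfl⟩, ?_⟩
        rw [hcanon]
        refine QuotientGroup.eq.mpr ?_
        refine (Subgroup.mem_subgroupOf).mpr ?_
        simpa [inv_mul_cancel_left] using hn
    rw [← hEq]
    exact hval
  refine ⟨?_, main⟩
  exact main (H : Set G) Set.Subset.rfl hH (fun f hf n hn => mul_mem hf hn.1)
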